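/- Let f : ℝ^d × ℝ^d → ℝ^d be anti-symmetric and let g : ℝ^d × ℝ^d → ℝ^{d×l}. Assume for constants L ≥ 0 and p ≥ 2: (i) (|x-x'|^{p-2} - |y-y'|^{p-2}) ⟨(x+y)-(x'+y'), f(x,y) - f(x',y')⟩ ≤ L(|x-x'|^p + |y-y'|^p); (ii) ⟨(x-y)-(x'-y'), f(x,y) - f(x',y')⟩ + 4(p-1)|g(x,y) - g(x',y')|² ≤ L|(x-y)-(x'-y')|², both for all x,x',y,y' ∈ ℝ^d. Then there exists K > 0, independent of N, such that for all N ∈ ℕ and all x¹,…,x^N, x̄¹,…,x̄^N ∈ ℝ^d, (1/N²) Σ_{i,j=1}^N |x^i - x̄^i|^{p-2} ( ⟨x^i - x̄^i, f(x^i,x^j) - f(x̄^i, x̄^j)⟩ + 2(p-1)|g(x^i,x^j) - g(x̄^i,x̄^j)|² ) ≤ (K/N) Σ_{i=1}^N |x^i - x̄^i|^p. -/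

import Mathlib

open RealInnerProductSpace

lemma double_sum_sym' {N : ℕ} (Q : Fin N → Fin N → ℝ) :
    (2:ℝ) * ∑ i, ∑ j, Q i j = ∑ i, ∑ j, (Q i j + Q j i) := by
  simp only [Finset.sum_add_distrib]
  rw [Finset.sum_comm (f := fun i j => Q j i)]
  ring

lemma double_sum_aux' {N : ℕ} (A : Fin N → ℝ) (c1 c2 : ℝ) :
    ∑ i, ∑ j, (c1 * A i + c2 * A j) = (c1 + c2) * (N:ℝ) * ∑ i, A i := by
  simp only [Finset.sum_add_distrib, Finset.sum_const, Finset.card_univ, Fintype.card_fin,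
    nsmul_eq_mul, ← Finset.mul_sum]
  ring

theorem stmt8 (d l : ℕ)
    (f : EuclideanSpace ℝ (Fin d) → EuclideanSpace ℝ (Fin d) → EuclideanSpace ℝ (Fin d))
    (g : EuclideanSpace ℝ (Fin d) → EuclideanSpace ℝ (Fin d) → EuclideanSpace ℝ (Fin d × Fin l))
    (L p : ℝ) (hL : 0 ≤ L) (hp : 2 ≤ p)
    (hanti : ∀ x y : EuclideanSpace ℝ (Fin d), f x y = - f y x)
    (h1 : ∀ x x' y y' : EuclideanSpace ℝ (Fin d),
      (‖x - x'‖ ^ (p - 2) - ‖y - y'‖ ^ (p - 2)) * ⟪(x + y) - (x' + y'), f x y - f x' y'⟫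
        ≤ L * (‖x - x'‖ ^ p + ‖y - y'‖ ^ p))
    (h2 : ∀ x x' y y' : EuclideanSpace ℝ (Fin d),
      ⟪(x - y) - (x' - y'), f x y - f x' y'⟫ + 4 * (p - 1) * ‖g x y - g x' y'‖ ^ 2
        ≤ L * ‖(x - y) - (x' - y')‖ ^ 2) :
    ∃ K > 0, ∀ (N : ℕ) (x xb : Fin N → EuclideanSpace ℝ (Fin d)),
      (1 / (N : ℝ) ^ 2) *
          ∑ i, ∑ j, ‖x i - xb i‖ ^ (p - 2) *
            (⟪x i - xb i, f (x i) (x j) - f (xb i) (xb j)⟫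
              + 2 * (p - 1) * ‖g (x i) (x j) - g (xb i) (xb j)‖ ^ 2)
        ≤ (K / (N : ℝ)) * ∑ i, ‖x i - xb i‖ ^ p := by
  have hp0 : (0:ℝ) < p := by linarith
  -- powers
  have hrp : ∀ t : ℝ, 0 ≤ t → t ^ (p - 2) * t ^ 2 = t ^ p := by
    intro t ht
    rw [show (t ^ 2 : ℝ) = t ^ (2:ℝ) by rw [← Real.rpow_natCast t 2]; norm_num,
      ← Real.rpow_add' ht (by rw [sub_add_cancel]; exact hp0.ne')]
    congr 1
    ring
  have hyoung : ∀ s t : ℝ, 0 ≤ s → 0 ≤ t → s ^ (p - 2) * t ^ 2 ≤ s ^ p + t ^ p := by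
    intro s t hs ht
    rcases le_total s t with h | h
    · have h1' : s ^ (p-2) * t ^ 2 ≤ t ^ (p-2) * t ^ 2 :=
        mul_le_mul_of_nonneg_right (Real.rpow_le_rpow hs h (by linarith)) (by positivity)
      have h2' := hrp t ht
      have h3' : (0:ℝ) ≤ s ^ p := Real.rpow_nonneg hs p
      linarith
    · have h1' : s ^ (p-2) * t ^ 2 ≤ s ^ (p-2) * s ^ 2 :=
        mul_le_mul_of_nonneg_left (by nlinarith) (Real.rpow_nonneg hs _)
      have h2' := hrp s hs
      have h3' : (0:ℝ) ≤ t ^ p := Real.rpow_nonneg ht p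
      linarith
  refine ⟨7 * L / 2 + 1, by linarith, ?_⟩
  intro N x xb
  by_cases hN : N = 0
  · subst hN; simp
  have hNpos : (0:ℝ) < N := by
    exact_mod_cast Nat.pos_of_ne_zero hN
  have hSp : (0:ℝ) ≤ ∑ i, ‖x i - xb i‖ ^ p :=
    Finset.sum_nonneg fun i _ => Real.rpow_nonneg (norm_nonneg _) _
  -- pointwise bound from h2
  have key : ∀ i j : Fin N,
      ‖x i - xb i‖ ^ (p - 2) *
        (⟪x i - xb i, f (x i) (x j) - f (xb i) (xb j)⟫ +
          2 * (p - 1) * ‖g (x i) (x j) - g (xb i) (xb j)‖ ^ 2)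
      ≤ (‖x i - xb i‖ ^ (p - 2) / 2) *
          ⟪(x i - xb i) + (x j - xb j), f (x i) (x j) - f (xb i) (xb j)⟫
        + (L / 2) * ‖x i - xb i‖ ^ (p - 2) * ‖(x i - xb i) - (x j - xb j)‖ ^ 2 := by
    intro i j
    have h2' := h2 (x i) (xb i) (x j) (xb j)
    have he : (x i - x j) - (xb i - xb j) = (x i - xb i) - (x j - xb j) := by abel
    rw [he, inner_sub_left] at h2'
    rw [inner_add_left]
    have hc : (0:ℝ) ≤ ‖x i - xb i‖ ^ (p - 2) := Real.rpow_nonneg (norm_nonneg _) _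
    nlinarith [mul_le_mul_of_nonneg_left h2' hc]
  -- bound the symmetrized first part using h1
  have hPsum : ∑ i, ∑ j, (‖x i - xb i‖ ^ (p - 2) / 2) *
        ⟪(x i - xb i) + (x j - xb j), f (x i) (x j) - f (xb i) (xb j)⟫
      ≤ (L / 2) * N * ∑ i, ‖x i - xb i‖ ^ p := by
    have hpair : ∀ i j : Fin N,
        (‖x i - xb i‖ ^ (p - 2) / 2) *
            ⟪(x i - xb i) + (x j - xb j), f (x i) (x j) - f (xb i) (xb j)⟫
          + (‖x j - xb j‖ ^ (p - 2) / 2) *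
            ⟪(x j - xb j) + (x i - xb i), f (x j) (x i) - f (xb j) (xb i)⟫
        ≤ (L/2) * (‖x i - xb i‖ ^ p + ‖x j - xb j‖ ^ p) := by
      intro i j
      have h1' := h1 (x i) (xb i) (x j) (xb j)
      have he : (x i + x j) - (xb i + xb j) = (x i - xb i) + (x j - xb j) := by abel
      rw [he] at h1'
      have hF : f (x j) (x i) - f (xb j) (xb i) = -(f (x i) (x j) - f (xb i) (xb j)) := by
        rw [hanti (x j) (x i), hanti (xb j) (xb i)]; abel
      rw [hF, inner_neg_right,
        show (x j - xb j) + (x i - xb i) = (x i - xb i) + (x j - xb j) by abel]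
      nlinarith [h1']
    have hsym := double_sum_sym' (fun i j => (‖x i - xb i‖ ^ (p - 2) / 2) *
        ⟪(x i - xb i) + (x j - xb j), f (x i) (x j) - f (xb i) (xb j)⟫)
    have hb : ∑ i, ∑ j, ((‖x i - xb i‖ ^ (p - 2) / 2) *
          ⟪(x i - xb i) + (x j - xb j), f (x i) (x j) - f (xb i) (xb j)⟫
        + (‖x j - xb j‖ ^ (p - 2) / 2) *
          ⟪(x j - xb j) + (x i - xb i), f (x j) (x i) - f (xb j) (xb i)⟫)
        ≤ ∑ i, ∑ j, (L/2) * (‖x i - xb i‖ ^ p + ‖x j - xb j‖ ^ p) :=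
      Finset.sum_le_sum fun i _ => Finset.sum_le_sum fun j _ => hpair i j
    have hc : ∑ i, ∑ j, (L/2) * (‖x i - xb i‖ ^ p + ‖x j - xb j‖ ^ p)
        = L * N * ∑ i, ‖x i - xb i‖ ^ p := by
      calc ∑ i, ∑ j, (L/2) * (‖x i - xb i‖ ^ p + ‖x j - xb j‖ ^ p)
          = ∑ i, ∑ j, ((L/2) * ‖x i - xb i‖ ^ p + (L/2) * ‖x j - xb j‖ ^ p) := by
            refine Finset.sum_congr rfl fun i _ => Finset.sum_congr rfl fun j _ => by ring
        _ = (L/2 + L/2) * N * ∑ i, ‖x i - xb i‖ ^ p := double_sum_aux' _ _ _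
        _ = L * N * ∑ i, ‖x i - xb i‖ ^ p := by ring
    rw [hc] at hb
    linarith [hsym.le, hsym.ge, hb]
  -- bound the second part
  have hQsum : ∑ i, ∑ j, (L / 2) * ‖x i - xb i‖ ^ (p - 2) * ‖(x i - xb i) - (x j - xb j)‖ ^ 2
      ≤ 3 * L * N * ∑ i, ‖x i - xb i‖ ^ p := by
    have hQ : ∀ i j : Fin N,
        (L / 2) * ‖x i - xb i‖ ^ (p - 2) * ‖(x i - xb i) - (x j - xb j)‖ ^ 2
        ≤ L * (2 * ‖x i - xb i‖ ^ p + ‖x j - xb j‖ ^ p) := by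
      intro i j
      have hD : ‖(x i - xb i) - (x j - xb j)‖ ^ 2
          ≤ 2 * ‖x i - xb i‖ ^ 2 + 2 * ‖x j - xb j‖ ^ 2 := by
        have h := norm_sub_le (x i - xb i) (x j - xb j)
        nlinarith [mul_self_le_mul_self (norm_nonneg ((x i - xb i) - (x j - xb j))) h,
          sq_nonneg (‖x i - xb i‖ - ‖x j - xb j‖)]
      have hci : (0:ℝ) ≤ ‖x i - xb i‖ ^ (p - 2) := Real.rpow_nonneg (norm_nonneg _) _
      have e1 : L * (‖x i - xb i‖ ^ (p - 2) * ‖x i - xb i‖ ^ 2) = L * ‖x i - xb i‖ ^ p := by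
        rw [hrp _ (norm_nonneg _)]
      have e2 : L * (‖x i - xb i‖ ^ (p - 2) * ‖x j - xb j‖ ^ 2)
          ≤ L * (‖x i - xb i‖ ^ p + ‖x j - xb j‖ ^ p) :=
        mul_le_mul_of_nonneg_left
          (hyoung _ _ (norm_nonneg _) (norm_nonneg _)) hL
      have f1 := mul_le_mul_of_nonneg_left hD
        (mul_nonneg (by linarith : (0:ℝ) ≤ L/2) hci)
      nlinarith [f1, e1, e2]
    have hb : ∑ i, ∑ j, (L / 2) * ‖x i - xb i‖ ^ (p - 2) * ‖(x i - xb i) - (x j - xb j)‖ ^ 2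
        ≤ ∑ i, ∑ j, L * (2 * ‖x i - xb i‖ ^ p + ‖x j - xb j‖ ^ p) :=
      Finset.sum_le_sum fun i _ => Finset.sum_le_sum fun j _ => hQ i j
    have hc : ∑ i, ∑ j, L * (2 * ‖x i - xb i‖ ^ p + ‖x j - xb j‖ ^ p)
        = 3 * L * N * ∑ i, ‖x i - xb i‖ ^ p := by
      calc ∑ i, ∑ j, L * (2 * ‖x i - xb i‖ ^ p + ‖x j - xb j‖ ^ p)
          = ∑ i, ∑ j, ((2*L) * ‖x i - xb i‖ ^ p + L * ‖x j - xb j‖ ^ p) := by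
            refine Finset.sum_congr rfl fun i _ => Finset.sum_congr rfl fun j _ => by ring
        _ = (2*L + L) * N * ∑ i, ‖x i - xb i‖ ^ p := double_sum_aux' _ _ _
        _ = 3 * L * N * ∑ i, ‖x i - xb i‖ ^ p := by ring
    linarith [hb, hc.ge, hc.le]
  -- assemble
  have hS : ∑ i, ∑ j, ‖x i - xb i‖ ^ (p - 2) *
        (⟪x i - xb i, f (x i) (x j) - f (xb i) (xb j)⟫
          + 2 * (p - 1) * ‖g (x i) (x j) - g (xb i) (xb j)‖ ^ 2)
      ≤ (7 * L / 2) * N * ∑ i, ‖x i - xb i‖ ^ p := by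
    have hb : ∑ i, ∑ j, ‖x i - xb i‖ ^ (p - 2) *
          (⟪x i - xb i, f (x i) (x j) - f (xb i) (xb j)⟫
            + 2 * (p - 1) * ‖g (x i) (x j) - g (xb i) (xb j)‖ ^ 2)
        ≤ ∑ i, ∑ j, ((‖x i - xb i‖ ^ (p - 2) / 2) *
            ⟪(x i - xb i) + (x j - xb j), f (x i) (x j) - f (xb i) (xb j)⟫
          + (L / 2) * ‖x i - xb i‖ ^ (p - 2) * ‖(x i - xb i) - (x j - xb j)‖ ^ 2) :=
      Finset.sum_le_sum fun i _ => Finset.sum_le_sum fun j _ => key i j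
    have hsplit : ∑ i, ∑ j, ((‖x i - xb i‖ ^ (p - 2) / 2) *
            ⟪(x i - xb i) + (x j - xb j), f (x i) (x j) - f (xb i) (xb j)⟫
          + (L / 2) * ‖x i - xb i‖ ^ (p - 2) * ‖(x i - xb i) - (x j - xb j)‖ ^ 2)
        = (∑ i, ∑ j, (‖x i - xb i‖ ^ (p - 2) / 2) *
            ⟪(x i - xb i) + (x j - xb j), f (x i) (x j) - f (xb i) (xb j)⟫)
          + ∑ i, ∑ j, (L / 2) * ‖x i - xb i‖ ^ (p - 2) * ‖(x i - xb i) - (x j - xb j)‖ ^ 2 := by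
      simp only [Finset.sum_add_distrib]
    have hmul : (L / 2) * N * (∑ i, ‖x i - xb i‖ ^ p) + 3 * L * N * (∑ i, ‖x i - xb i‖ ^ p)
        = (7 * L / 2) * N * ∑ i, ‖x i - xb i‖ ^ p := by ring
    linarith [hb, hPsum, hQsum]
  have hfinal : (1 / (N : ℝ) ^ 2) *
        ∑ i, ∑ j, ‖x i - xb i‖ ^ (p - 2) *
          (⟪x i - xb i, f (x i) (x j) - f (xb i) (xb j)⟫
            + 2 * (p - 1) * ‖g (x i) (x j) - g (xb i) (xb j)‖ ^ 2)
      ≤ (1 / (N : ℝ) ^ 2) * ((7 * L / 2) * N * ∑ i, ‖x i - xb i‖ ^ p) :=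
    mul_le_mul_of_nonneg_left hS (by positivity)
  have heq : (1 / (N : ℝ) ^ 2) * ((7 * L / 2) * N * ∑ i, ‖x i - xb i‖ ^ p)
      = ((7 * L / 2) / N) * ∑ i, ‖x i - xb i‖ ^ p := by
    field_simp
  have hlast : ((7 * L / 2) / N) * ∑ i, ‖x i - xb i‖ ^ p
      ≤ ((7 * L / 2 + 1) / N) * ∑ i, ‖x i - xb i‖ ^ p := by
    apply mul_le_mul_of_nonneg_right _ hSp
    gcongr
    linarith
  linarith [hfinal, heq.le, heq.ge, hlast]
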